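/- Let A, B, W, H, G, D be random variables taking values in finite sets such that H(G | (A, H)) = 0 (the sender's message G is a.s. a function of its data A and the past transcript H) and H(D | (H, G, W, B)) = 0 (the receiver's reply D is a.s. a function of the past transcript (H, G) and its data (W, B)). Then I(A; B | (H, G, D, W)) ≤ I(A; B | (H, W)). Consequently, if I(A; B | (H, W)) = 0 then I(A; B | (H, G, D, W)) = 0: one round of public communication preserves conditional independence of the parties' private data. -/

import Mathlib

open scoped BigOperators Classical

noncomputable section

namespace OT

variable {Ω : Type*} [Fintype Ω]

/-- Probability of an event under a pmf on a finite sample space. -/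
def pr (μ : Ω → ℝ) (s : Set Ω) : ℝ := ∑ ω, s.indicator μ ω

/-- `q` is a probability mass function on a finite type. -/
def isDist {α : Type*} [Fintype α] (q : α → ℝ) : Prop := (∀ a, 0 ≤ q a) ∧ ∑ a, q a = 1

/-- Distribution (pmf) of a random variable. -/
def dst {α : Type*} (μ : Ω → ℝ) (X : Ω → α) : α → ℝ := fun a => pr μ {ω | X ω = a}

/-- Joint distribution of two random variables. -/
def jd {α β : Type*} (μ : Ω → ℝ) (X : Ω → α) (Y : Ω → β) : α × β → ℝ :=
  fun q => pr μ {ω | X ω = q.1 ∧ Y ω = q.2}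

/-- Conditional pmf given an event. -/
def cnd (μ : Ω → ℝ) (s : Set Ω) : Ω → ℝ := fun ω => s.indicator μ ω / pr μ s

/-- Shannon entropy (in bits) of a pmf on a finite type. -/
def entD {α : Type*} [Fintype α] (q : α → ℝ) : ℝ := ∑ a, -(q a * Real.logb 2 (q a))

/-- Shannon entropy (in bits) of a random variable. -/
def ent {α : Type*} [Fintype α] (μ : Ω → ℝ) (X : Ω → α) : ℝ := entD (dst μ X)

/-- Conditional Shannon entropy `H(X|Y)` (in bits). -/
def condEnt {α β : Type*} [Fintype α] [Fintype β] (μ : Ω → ℝ) (X : Ω → α) (Y : Ω → β) : ℝ :=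
  ent μ (fun ω => (X ω, Y ω)) - ent μ Y

/-- Mutual information `I(X;Y)` (in bits). -/
def mi {α β : Type*} [Fintype α] [Fintype β] (μ : Ω → ℝ) (X : Ω → α) (Y : Ω → β) : ℝ :=
  ent μ X + ent μ Y - ent μ (fun ω => (X ω, Y ω))

/-- Conditional mutual information `I(X;Y|Z)` (in bits). -/
def cmi {α β γ : Type*} [Fintype α] [Fintype β] [Fintype γ]
    (μ : Ω → ℝ) (X : Ω → α) (Y : Ω → β) (Z : Ω → γ) : ℝ :=
  ent μ (fun ω => (X ω, Z ω)) + ent μ (fun ω => (Y ω, Z ω))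
    - ent μ (fun ω => (X ω, Y ω, Z ω)) - ent μ Z

/-- Rényi entropy of order two (in bits). -/
def ren2 {α : Type*} [Fintype α] (μ : Ω → ℝ) (X : Ω → α) : ℝ :=
  Real.logb 2 (1 / ∑ a, (dst μ X a) ^ 2)

/-- Statistical (total variation) distance between two pmfs. -/
def sd {α : Type*} [Fintype α] (q q' : α → ℝ) : ℝ := (∑ a, |q a - q' a|) / 2

/-- Conditional min-entropy `H∞(X|Y)` of a joint pmf (in bits):
the minimum over `(a,b)` in the support of `log₂ (P(Y=b) / P(X=a, Y=b))`. -/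
def minEnt {α β : Type*} [Fintype α] [Fintype β] (q : α × β → ℝ) : ℝ :=
  sInf {r | ∃ a b, 0 < q (a, b) ∧ r = Real.logb 2 ((∑ a', q (a', b)) / q (a, b))}

/-- `ε`-smooth conditional min-entropy of a joint pmf (in bits). -/
def sminEnt {α β : Type*} [Fintype α] [Fintype β] (q : α × β → ℝ) (ε : ℝ) : ℝ :=
  sSup {r | ∃ q' : α × β → ℝ, isDist q' ∧ sd q q' ≤ ε ∧ r = minEnt q'}

/-- Conditional zero-entropy `H₀(X|Y)` of a joint pmf (in bits). -/
def zeroEnt {α β : Type*} [Fintype α] [Fintype β] (q : α × β → ℝ) : ℝ :=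
  sSup {r | ∃ b, 0 < ∑ a, q (a, b) ∧
    r = Real.logb 2 ((Finset.univ.filter fun a => 0 < q (a, b)).card)}

end OT

open OT

section Statement13Aux

variable {Ω : Type*} [Fintype Ω]

lemma dst_nonneg {α : Type*} (μ : Ω → ℝ) (hpos : ∀ ω, 0 ≤ μ ω) (X : Ω → α) (a : α) :
    0 ≤ dst μ X a :=
  Finset.sum_nonneg fun ω _ => Set.indicator_nonneg (fun ω' _ => hpos ω') ω

lemma marg_fst {α β : Type*} [Fintype α] (μ : Ω → ℝ) (f : Ω → α) (g : Ω → β) (y : β) :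
    dst μ g y = ∑ x, dst μ (fun ω => (f ω, g ω)) (x, y) := by
  unfold dst pr
  rw [Finset.sum_comm]
  refine Finset.sum_congr rfl fun ω _ => ?_
  simp only [Set.indicator_apply, Set.mem_setOf_eq, Prod.mk.injEq]
  by_cases hg : g ω = y <;> simp [hg]

lemma marg_snd {α β γ : Type*} [Fintype β] (μ : Ω → ℝ) (f : Ω → α) (g : Ω → β) (h : Ω → γ)
    (x : α) (z : γ) :
    dst μ (fun ω => (f ω, h ω)) (x, z) = ∑ y, dst μ (fun ω => (f ω, g ω, h ω)) (x, y, z) := by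
  unfold dst pr
  rw [Finset.sum_comm]
  refine Finset.sum_congr rfl fun ω _ => ?_
  simp only [Set.indicator_apply, Set.mem_setOf_eq, Prod.mk.injEq]
  by_cases hf : f ω = x <;> by_cases hh : h ω = z <;> simp [hf, hh]

lemma ent_relabel {α β : Type*} [Fintype α] [Fintype β] (μ : Ω → ℝ) (X : Ω → α)
    (e : α → β) (f : β → α) (hfe : ∀ a, f (e a) = a) :
    ent μ (fun ω => e (X ω)) = ent μ X := by
  have he : Function.Injective e := Function.LeftInverse.injective hfe
  unfold ent entD
  set q := dst μ (fun ω => e (X ω)) with hq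
  have h1 : ∑ b : β, -(q b * Real.logb 2 (q b))
      = ∑ b ∈ Finset.univ.image e, -(q b * Real.logb 2 (q b)) := by
    refine (Finset.sum_subset (Finset.subset_univ _) ?_).symm
    intro b _ hb
    have hz : q b = 0 := by
      rw [hq]
      unfold dst pr
      refine Finset.sum_eq_zero fun ω _ => ?_
      simp only [Set.indicator_apply, Set.mem_setOf_eq]
      rw [if_neg]
      intro h
      exact hb (Finset.mem_image.mpr ⟨X ω, Finset.mem_univ _, h⟩)
    simp [hz]
  rw [h1, Finset.sum_image (fun a _ b _ h => he h)]
  refine Finset.sum_congr rfl fun a _ => ?_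
  have : q (e a) = dst μ X a := by
    rw [hq]
    unfold dst pr
    refine Finset.sum_congr rfl fun ω _ => ?_
    simp only [Set.indicator_apply, Set.mem_setOf_eq, he.eq_iff]
  rw [this]


lemma sum_abc {α β γ : Type*} [Fintype α] [Fintype β] [Fintype γ] (f : α × β × γ → ℝ) :
    ∑ x, f x = ∑ a, ∑ b, ∑ c, f (a, b, c) := by
  rw [Fintype.sum_prod_type]
  exact Finset.sum_congr rfl fun a _ => Fintype.sum_prod_type _

lemma sum_acb {α β γ : Type*} [Fintype α] [Fintype β] [Fintype γ] (f : α × β × γ → ℝ) :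
    ∑ x, f x = ∑ a, ∑ c, ∑ b, f (a, b, c) :=
  (sum_abc f).trans (Finset.sum_congr rfl fun _ _ => Finset.sum_comm)

lemma sum_cab {α β γ : Type*} [Fintype α] [Fintype β] [Fintype γ] (f : α × β × γ → ℝ) :
    ∑ x, f x = ∑ c, ∑ a, ∑ b, f (a, b, c) :=
  (sum_acb f).trans Finset.sum_comm

lemma sum_bca {α β γ : Type*} [Fintype α] [Fintype β] [Fintype γ] (f : α × β × γ → ℝ) :
    ∑ x, f x = ∑ b, ∑ c, ∑ a, f (a, b, c) :=
  (sum_abc f).trans (Finset.sum_comm.trans (Finset.sum_congr rfl fun _ _ => Finset.sum_comm))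

lemma sum_cba {α β γ : Type*} [Fintype α] [Fintype β] [Fintype γ] (f : α × β × γ → ℝ) :
    ∑ x, f x = ∑ c, ∑ b, ∑ a, f (a, b, c) :=
  (sum_bca f).trans Finset.sum_comm

lemma neg_sum_mul {ι : Type*} (s : Finset ι) (f : ι → ℝ) (K : ℝ) :
    -((∑ i ∈ s, f i) * K) = ∑ i ∈ s, -(f i * K) := by
  rw [Finset.sum_mul, ← Finset.sum_neg_distrib]

lemma log2_sum_neg_logb {α : Type*} [Fintype α] (q : α → ℝ) :
    Real.log 2 * (∑ a, -(q a * Real.logb 2 (q a))) = ∑ a, -(q a * Real.log (q a)) := by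
  rw [Finset.mul_sum]
  refine Finset.sum_congr rfl fun a _ => ?_
  have h : Real.log 2 ≠ 0 := ne_of_gt (Real.log_pos one_lt_two)
  simp only [Real.logb]
  field_simp

lemma cmi_nonneg {α β γ : Type*} [Fintype α] [Fintype β] [Fintype γ]
    (μ : Ω → ℝ) (hpos : ∀ ω, 0 ≤ μ ω) (X : Ω → α) (Y : Ω → β) (Z : Ω → γ) :
    0 ≤ cmi μ X Y Z := by
  classical
  set p : α × β × γ → ℝ := dst μ (fun ω => (X ω, Y ω, Z ω)) with hpdef
  set p13 : α × γ → ℝ := dst μ (fun ω => (X ω, Z ω)) with h13def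
  set p23 : β × γ → ℝ := dst μ (fun ω => (Y ω, Z ω)) with h23def
  set p3 : γ → ℝ := dst μ Z with h3def
  have hp0 : ∀ x, 0 ≤ p x := fun x => dst_nonneg μ hpos _ x
  have hp13nn : ∀ y, 0 ≤ p13 y := fun y => dst_nonneg μ hpos _ y
  have hp23nn : ∀ y, 0 ≤ p23 y := fun y => dst_nonneg μ hpos _ y
  have hp3nn : ∀ c, 0 ≤ p3 c := fun c => dst_nonneg μ hpos _ c
  have h13 : ∀ a c, p13 (a, c) = ∑ b, p (a, b, c) := fun a c => marg_snd μ X Y Z a c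
  have h23 : ∀ b c, p23 (b, c) = ∑ a, p (a, b, c) := fun b c =>
    marg_fst μ X (fun ω => (Y ω, Z ω)) (b, c)
  have h3 : ∀ c, p3 c = ∑ b, p23 (b, c) := fun c => marg_fst μ Y Z c
  have h3' : ∀ c, p3 c = ∑ a, p13 (a, c) := by
    intro c
    rw [h3]
    rw [show (∑ b, p23 (b, c)) = ∑ b, ∑ a, p (a, b, c) from
      Finset.sum_congr rfl fun b _ => h23 b c]
    rw [Finset.sum_comm]
    exact (Finset.sum_congr rfl fun a _ => (h13 a c).symm)
  -- the auxiliary comparison distribution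
  set q : α × β × γ → ℝ :=
    fun x => if 0 < p3 x.2.2 then p13 (x.1, x.2.2) * p23 x.2 / p3 x.2.2 else 0 with hqdef
  have hq0 : ∀ x, 0 ≤ q x := by
    intro x
    rw [hqdef]
    dsimp only
    split
    · exact div_nonneg (mul_nonneg (hp13nn _) (hp23nn _)) (hp3nn _)
    · exact le_rfl
  -- rewrite log2 * cmi as a single sum
  have e13 : (∑ y : α × γ, -(p13 y * Real.log (p13 y)))
      = ∑ x : α × β × γ, -(p x * Real.log (p13 (x.1, x.2.2))) := by
    rw [sum_acb fun x => -(p x * Real.log (p13 (x.1, x.2.2))), Fintype.sum_prod_type]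
    refine Finset.sum_congr rfl fun a _ => Finset.sum_congr rfl fun c _ => ?_
    rw [show p13 (a, c) * Real.log (p13 (a, c))
        = (∑ b, p (a, b, c)) * Real.log (p13 (a, c)) by rw [← h13]]
    exact neg_sum_mul _ _ _
  have e23 : (∑ y : β × γ, -(p23 y * Real.log (p23 y)))
      = ∑ x : α × β × γ, -(p x * Real.log (p23 x.2)) := by
    rw [sum_bca fun x => -(p x * Real.log (p23 x.2)), Fintype.sum_prod_type]
    refine Finset.sum_congr rfl fun b _ => Finset.sum_congr rfl fun c _ => ?_
    rw [show p23 (b, c) * Real.log (p23 (b, c))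
        = (∑ a, p (a, b, c)) * Real.log (p23 (b, c)) by rw [← h23]]
    exact neg_sum_mul _ _ _
  have e3 : (∑ c, -(p3 c * Real.log (p3 c)))
      = ∑ x : α × β × γ, -(p x * Real.log (p3 x.2.2)) := by
    rw [sum_cba fun x => -(p x * Real.log (p3 x.2.2))]
    refine Finset.sum_congr rfl fun c _ => ?_
    rw [show p3 c * Real.log (p3 c) = (∑ b, ∑ a, p (a, b, c)) * Real.log (p3 c) by
      rw [show (∑ b, ∑ a, p (a, b, c)) = ∑ b, p23 (b, c) from
        Finset.sum_congr rfl fun b _ => (h23 b c).symm, ← h3]]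
    rw [neg_sum_mul]
    exact Finset.sum_congr rfl fun b _ => neg_sum_mul _ _ _
  have key : Real.log 2 * cmi μ X Y Z
      = ∑ x : α × β × γ, (-(p x * Real.log (p13 (x.1, x.2.2))) + -(p x * Real.log (p23 x.2))
          - -(p x * Real.log (p x)) - -(p x * Real.log (p3 x.2.2))) := by
    have : Real.log 2 * cmi μ X Y Z
        = (∑ y : α × γ, -(p13 y * Real.log (p13 y)))
          + (∑ y : β × γ, -(p23 y * Real.log (p23 y)))
          - (∑ x, -(p x * Real.log (p x)))
          - (∑ c, -(p3 c * Real.log (p3 c))) := by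
      show Real.log 2 * ((∑ y : α × γ, -(p13 y * Real.logb 2 (p13 y)))
          + (∑ y : β × γ, -(p23 y * Real.logb 2 (p23 y)))
          - (∑ x, -(p x * Real.logb 2 (p x)))
          - (∑ c, -(p3 c * Real.logb 2 (p3 c)))) = _
      rw [mul_sub, mul_sub, mul_add, log2_sum_neg_logb, log2_sum_neg_logb,
        log2_sum_neg_logb, log2_sum_neg_logb]
    rw [this, e13, e23, e3, ← Finset.sum_add_distrib, ← Finset.sum_sub_distrib,
      ← Finset.sum_sub_distrib]
  -- pointwise bound
  have hpt : ∀ x : α × β × γ, p x - q x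
      ≤ -(p x * Real.log (p13 (x.1, x.2.2))) + -(p x * Real.log (p23 x.2))
          - -(p x * Real.log (p x)) - -(p x * Real.log (p3 x.2.2)) := by
    rintro ⟨a, b, c⟩
    dsimp only
    by_cases hx : 0 < p (a, b, c)
    · have h13p : 0 < p13 (a, c) := lt_of_lt_of_le hx (by
        rw [h13]; exact Finset.single_le_sum (fun i _ => hp0 (a, i, c)) (Finset.mem_univ b))
      have h23p : 0 < p23 (b, c) := lt_of_lt_of_le hx (by
        rw [h23]; exact Finset.single_le_sum (fun i _ => hp0 (i, b, c)) (Finset.mem_univ a))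
      have h3p : 0 < p3 c := lt_of_lt_of_le h23p (by
        rw [h3]; exact Finset.single_le_sum (fun i _ => hp23nn (i, c)) (Finset.mem_univ b))
      have hqval : q (a, b, c) = p13 (a, c) * p23 (b, c) / p3 c := by
        rw [hqdef]; exact if_pos h3p
      have hqpos : 0 < q (a, b, c) := by
        rw [hqval]; positivity
      have hlog : Real.log (q (a, b, c) / p (a, b, c)) ≤ q (a, b, c) / p (a, b, c) - 1 :=
        Real.log_le_sub_one_of_pos (by positivity)
      have hsplit : Real.log (q (a, b, c) / p (a, b, c))
          = Real.log (p13 (a, c)) + Real.log (p23 (b, c)) - Real.log (p3 c)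
            - Real.log (p (a, b, c)) := by
        rw [hqval, Real.log_div (by positivity) (ne_of_gt hx),
          Real.log_div (by positivity) (ne_of_gt h3p),
          Real.log_mul (ne_of_gt h13p) (ne_of_gt h23p)]
      have hmul : p (a, b, c) * Real.log (q (a, b, c) / p (a, b, c))
          ≤ q (a, b, c) - p (a, b, c) := by
        have h1 := mul_le_mul_of_nonneg_left hlog hx.le
        have h2 : p (a, b, c) * (q (a, b, c) / p (a, b, c) - 1)
            = q (a, b, c) - p (a, b, c) := by
          field_simp
        linarith
      rw [hsplit] at hmul
      nlinarith [hmul]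
    · have hx0 : p (a, b, c) = 0 := le_antisymm (not_lt.mp hx) (hp0 _)
      rw [hx0]
      simp only [zero_mul, neg_zero, add_zero, sub_zero, zero_sub]
      linarith [hq0 (a, b, c)]
  -- sum of q is at most sum of p
  have hsumq : ∑ x, q x ≤ ∑ x, p x := by
    have hqe : ∑ x, q x = ∑ c, (if 0 < p3 c then p3 c else 0) := by
      rw [sum_cab]
      refine Finset.sum_congr rfl fun c _ => ?_
      by_cases h3c : 0 < p3 c
      · rw [if_pos h3c]
        have step : ∀ a, ∑ b, q (a, b, c) = p13 (a, c) * p3 c / p3 c := by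
          intro a
          rw [show (∑ b, q (a, b, c)) = ∑ b, p13 (a, c) * p23 (b, c) / p3 c from
            Finset.sum_congr rfl fun b _ => by rw [hqdef]; exact if_pos h3c]
          rw [← Finset.sum_div, ← Finset.mul_sum, ← h3]
        rw [Finset.sum_congr rfl fun a _ => step a, ← Finset.sum_div, ← Finset.sum_mul,
          ← h3', mul_div_assoc, div_self (ne_of_gt h3c), mul_one]
      · rw [if_neg h3c]
        refine Finset.sum_eq_zero fun a _ => Finset.sum_eq_zero fun b _ => ?_
        rw [hqdef]; exact if_neg h3c
    have hpe : ∑ x, p x = ∑ c, p3 c := by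
      rw [sum_cba]
      refine (Finset.sum_congr rfl fun c _ => ?_).symm
      rw [h3]
      exact Finset.sum_congr rfl fun b _ => h23 b c
    rw [hqe, hpe]
    exact Finset.sum_le_sum fun c _ => by split <;> simp [hp3nn c]
  have hfinal : 0 ≤ Real.log 2 * cmi μ X Y Z := by
    rw [key]
    have h1 : ∑ x, (p x - q x) ≤ ∑ x : α × β × γ,
        (-(p x * Real.log (p13 (x.1, x.2.2))) + -(p x * Real.log (p23 x.2))
          - -(p x * Real.log (p x)) - -(p x * Real.log (p3 x.2.2))) :=
      Finset.sum_le_sum fun x _ => hpt x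
    have h2 : (0:ℝ) ≤ ∑ x, (p x - q x) := by
      rw [Finset.sum_sub_distrib]
      linarith
    linarith
  exact (mul_nonneg_iff_of_pos_left (Real.log_pos one_lt_two)).mp hfinal


lemma condEnt_nonneg {α β : Type*} [Fintype α] [Fintype β] (μ : Ω → ℝ) (hpos : ∀ ω, 0 ≤ μ ω)
    (X : Ω → α) (Y : Ω → β) : 0 ≤ condEnt μ X Y := by
  have e : ent μ (fun ω => (X ω, X ω, Y ω)) = ent μ (fun ω => (X ω, Y ω)) :=
    ent_relabel μ (fun ω => (X ω, Y ω)) (fun r => (r.1, r.1, r.2)) (fun r => (r.1, r.2.2))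
      (fun _ => rfl)
  have c : (0:ℝ) ≤ ent μ (fun ω => (X ω, Y ω)) + ent μ (fun ω => (X ω, Y ω))
      - ent μ (fun ω => (X ω, X ω, Y ω)) - ent μ Y := cmi_nonneg μ hpos X X Y
  show (0:ℝ) ≤ ent μ (fun ω => (X ω, Y ω)) - ent μ Y
  linarith

lemma ent_extend {α β γ : Type*} [Fintype α] [Fintype β] [Fintype γ] (μ : Ω → ℝ)
    (hpos : ∀ ω, 0 ≤ μ ω) (X : Ω → α) (U : Ω → β) (Y : Ω → γ)
    (h : ent μ (fun ω => (X ω, Y ω)) = ent μ Y) :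
    ent μ (fun ω => (X ω, U ω, Y ω)) = ent μ (fun ω => (U ω, Y ω)) := by
  have c1 : (0:ℝ) ≤ ent μ (fun ω => (X ω, Y ω)) + ent μ (fun ω => (U ω, Y ω))
      - ent μ (fun ω => (X ω, U ω, Y ω)) - ent μ Y := cmi_nonneg μ hpos X U Y
  have c2 : (0:ℝ) ≤ ent μ (fun ω => (X ω, U ω, Y ω)) - ent μ (fun ω => (U ω, Y ω)) :=
    condEnt_nonneg μ hpos X (fun ω => (U ω, Y ω))
  linarith

end Statement13Aux

/-- if the sender's message `G` is a.s. a function of `(A,H)` and the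
receiver's reply `D` is a.s. a function of `(H,G,W,B)`, then
`I(A;B|(H,G,D,W)) ≤ I(A;B|(H,W))`; consequently one round of public communication
preserves conditional independence of the parties' private data. -/
theorem statement13 {Ω A B C D E F : Type*} [Fintype Ω] [Fintype A] [Fintype B] [Fintype C]
    [Fintype D] [Fintype E] [Fintype F]
    (μ : Ω → ℝ) (hμ : isDist μ)
    (Aa : Ω → A) (Bb : Ω → B) (W : Ω → C) (Hh : Ω → D) (Gg : Ω → E) (Dd : Ω → F)
    (h1 : condEnt μ Gg (fun ω => (Aa ω, Hh ω)) = 0)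
    (h2 : condEnt μ Dd (fun ω => (Hh ω, Gg ω, W ω, Bb ω)) = 0) :
    cmi μ Aa Bb (fun ω => (Hh ω, Gg ω, Dd ω, W ω)) ≤ cmi μ Aa Bb (fun ω => (Hh ω, W ω))
    ∧ (cmi μ Aa Bb (fun ω => (Hh ω, W ω)) = 0 →
        cmi μ Aa Bb (fun ω => (Hh ω, Gg ω, Dd ω, W ω)) = 0) := by
  have hpos : ∀ ω, 0 ≤ μ ω := hμ.1
  have h1' : ent μ (fun ω => (Gg ω, Aa ω, Hh ω)) = ent μ (fun ω => (Aa ω, Hh ω)) := by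
    rw [← sub_eq_zero]; exact h1
  have h2' : ent μ (fun ω => (Dd ω, Hh ω, Gg ω, W ω, Bb ω))
      = ent μ (fun ω => (Hh ω, Gg ω, W ω, Bb ω)) := by
    rw [← sub_eq_zero]; exact h2
  have stepA : ent μ (fun ω => (Gg ω, W ω, Aa ω, Hh ω)) = ent μ (fun ω => (W ω, Aa ω, Hh ω)) :=
    ent_extend μ hpos Gg W (fun ω => (Aa ω, Hh ω)) h1'
  have stepB : ent μ (fun ω => (Gg ω, (Bb ω, W ω), Aa ω, Hh ω))
      = ent μ (fun ω => ((Bb ω, W ω), Aa ω, Hh ω)) :=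
    ent_extend μ hpos Gg (fun ω => (Bb ω, W ω)) (fun ω => (Aa ω, Hh ω)) h1'
  have stepD : ent μ (fun ω => (Dd ω, Aa ω, Hh ω, Gg ω, W ω, Bb ω))
      = ent μ (fun ω => (Aa ω, Hh ω, Gg ω, W ω, Bb ω)) :=
    ent_extend μ hpos Dd Aa (fun ω => (Hh ω, Gg ω, W ω, Bb ω)) h2'
  have I1 : (0:ℝ) ≤ ent μ (fun ω => (Gg ω, Hh ω, W ω)) + ent μ (fun ω => (Bb ω, Hh ω, W ω))
      - ent μ (fun ω => (Gg ω, Bb ω, Hh ω, W ω)) - ent μ (fun ω => (Hh ω, W ω)) :=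
    cmi_nonneg μ hpos Gg Bb (fun ω => (Hh ω, W ω))
  have I2 : (0:ℝ) ≤ ent μ (fun ω => (Dd ω, Hh ω, Gg ω, W ω))
      + ent μ (fun ω => (Aa ω, Hh ω, Gg ω, W ω))
      - ent μ (fun ω => (Dd ω, Aa ω, Hh ω, Gg ω, W ω)) - ent μ (fun ω => (Hh ω, Gg ω, W ω)) :=
    cmi_nonneg μ hpos Dd Aa (fun ω => (Hh ω, Gg ω, W ω))
  have r1 : ent μ (fun ω => (Gg ω, Hh ω, W ω)) = ent μ (fun ω => (Hh ω, Gg ω, W ω)) :=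
    ent_relabel μ (fun ω => (Hh ω, Gg ω, W ω)) (fun r => (r.2.1, r.1, r.2.2)) (fun s => (s.2.1, s.1, s.2.2)) (fun _ => rfl)
  have r2a : ent μ (fun ω => (Gg ω, W ω, Aa ω, Hh ω)) = ent μ (fun ω => (Aa ω, Hh ω, Gg ω, W ω)) :=
    ent_relabel μ (fun ω => (Aa ω, Hh ω, Gg ω, W ω)) (fun r => (r.2.2.1, r.2.2.2, r.1, r.2.1)) (fun s => (s.2.2.1, s.2.2.2, s.1, s.2.1)) (fun _ => rfl)
  have r2b : ent μ (fun ω => (W ω, Aa ω, Hh ω)) = ent μ (fun ω => (Aa ω, Hh ω, W ω)) :=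
    ent_relabel μ (fun ω => (Aa ω, Hh ω, W ω)) (fun r => (r.2.2, r.1, r.2.1)) (fun s => (s.2.1, s.2.2, s.1)) (fun _ => rfl)
  have r3a : ent μ (fun ω => (Gg ω, (Bb ω, W ω), Aa ω, Hh ω)) = ent μ (fun ω => (Aa ω, Bb ω, Hh ω, Gg ω, W ω)) :=
    ent_relabel μ (fun ω => (Aa ω, Bb ω, Hh ω, Gg ω, W ω)) (fun r => (r.2.2.2.1, (r.2.1, r.2.2.2.2), (r.1, r.2.2.1))) (fun s => (s.2.2.1, s.2.1.1, s.2.2.2, s.1, s.2.1.2)) (fun _ => rfl)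
  have r3b : ent μ (fun ω => ((Bb ω, W ω), Aa ω, Hh ω)) = ent μ (fun ω => (Aa ω, Bb ω, Hh ω, W ω)) :=
    ent_relabel μ (fun ω => (Aa ω, Bb ω, Hh ω, W ω)) (fun r => ((r.2.1, r.2.2.2), (r.1, r.2.2.1))) (fun s => (s.2.1, s.1.1, s.2.2, s.1.2)) (fun _ => rfl)
  have r4a : ent μ (fun ω => (Dd ω, Hh ω, Gg ω, W ω, Bb ω)) = ent μ (fun ω => (Bb ω, Hh ω, Gg ω, Dd ω, W ω)) :=
    ent_relabel μ (fun ω => (Bb ω, Hh ω, Gg ω, Dd ω, W ω)) (fun r => (r.2.2.2.1, r.2.1, r.2.2.1, r.2.2.2.2, r.1)) (fun s => (s.2.2.2.2, s.2.1, s.2.2.1, s.1, s.2.2.2.1)) (fun _ => rfl)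
  have r4b : ent μ (fun ω => (Hh ω, Gg ω, W ω, Bb ω)) = ent μ (fun ω => (Gg ω, Bb ω, Hh ω, W ω)) :=
    ent_relabel μ (fun ω => (Gg ω, Bb ω, Hh ω, W ω)) (fun r => (r.2.2.1, r.1, r.2.2.2, r.2.1)) (fun s => (s.2.1, s.2.2.2, s.1, s.2.2.1)) (fun _ => rfl)
  have r5a : ent μ (fun ω => (Dd ω, Aa ω, Hh ω, Gg ω, W ω, Bb ω)) = ent μ (fun ω => (Aa ω, Bb ω, Hh ω, Gg ω, Dd ω, W ω)) :=
    ent_relabel μ (fun ω => (Aa ω, Bb ω, Hh ω, Gg ω, Dd ω, W ω)) (fun r => (r.2.2.2.2.1, r.1, r.2.2.1, r.2.2.2.1, r.2.2.2.2.2, r.2.1)) (fun s => (s.2.1, s.2.2.2.2.2, s.2.2.1, s.2.2.2.1, s.1, s.2.2.2.2.1)) (fun _ => rfl)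
  have r5b : ent μ (fun ω => (Aa ω, Hh ω, Gg ω, W ω, Bb ω)) = ent μ (fun ω => (Aa ω, Bb ω, Hh ω, Gg ω, W ω)) :=
    ent_relabel μ (fun ω => (Aa ω, Bb ω, Hh ω, Gg ω, W ω)) (fun r => (r.1, r.2.2.1, r.2.2.2.1, r.2.2.2.2, r.2.1)) (fun s => (s.1, s.2.2.2.2, s.2.1, s.2.2.1, s.2.2.2.1)) (fun _ => rfl)
  have r6 : ent μ (fun ω => (Dd ω, Aa ω, Hh ω, Gg ω, W ω)) = ent μ (fun ω => (Aa ω, Hh ω, Gg ω, Dd ω, W ω)) :=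
    ent_relabel μ (fun ω => (Aa ω, Hh ω, Gg ω, Dd ω, W ω)) (fun r => (r.2.2.2.1, r.1, r.2.1, r.2.2.1, r.2.2.2.2)) (fun s => (s.2.1, s.2.2.1, s.2.2.2.1, s.1, s.2.2.2.2)) (fun _ => rfl)
  have r7 : ent μ (fun ω => (Dd ω, Hh ω, Gg ω, W ω)) = ent μ (fun ω => (Hh ω, Gg ω, Dd ω, W ω)) :=
    ent_relabel μ (fun ω => (Hh ω, Gg ω, Dd ω, W ω)) (fun r => (r.2.2.1, r.1, r.2.1, r.2.2.2)) (fun s => (s.2.1, s.2.2.1, s.1, s.2.2.2)) (fun _ => rfl)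
  have Ea : ent μ (fun ω => (Aa ω, Hh ω, Gg ω, W ω)) = ent μ (fun ω => (Aa ω, Hh ω, W ω)) := by
    rw [← r2a, stepA, r2b]
  have Eb : ent μ (fun ω => (Aa ω, Bb ω, Hh ω, Gg ω, W ω))
      = ent μ (fun ω => (Aa ω, Bb ω, Hh ω, W ω)) := by
    rw [← r3a, stepB, r3b]
  have Ec : ent μ (fun ω => (Bb ω, Hh ω, Gg ω, Dd ω, W ω))
      = ent μ (fun ω => (Gg ω, Bb ω, Hh ω, W ω)) := by
    rw [← r4a, h2', r4b]
  have Ed : ent μ (fun ω => (Aa ω, Bb ω, Hh ω, Gg ω, Dd ω, W ω))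
      = ent μ (fun ω => (Aa ω, Bb ω, Hh ω, Gg ω, W ω)) := by
    rw [← r5a, stepD, r5b]
  have main : cmi μ Aa Bb (fun ω => (Hh ω, Gg ω, Dd ω, W ω))
      ≤ cmi μ Aa Bb (fun ω => (Hh ω, W ω)) := by
    show ent μ (fun ω => (Aa ω, Hh ω, Gg ω, Dd ω, W ω))
        + ent μ (fun ω => (Bb ω, Hh ω, Gg ω, Dd ω, W ω))
        - ent μ (fun ω => (Aa ω, Bb ω, Hh ω, Gg ω, Dd ω, W ω))
        - ent μ (fun ω => (Hh ω, Gg ω, Dd ω, W ω))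
        ≤ ent μ (fun ω => (Aa ω, Hh ω, W ω)) + ent μ (fun ω => (Bb ω, Hh ω, W ω))
          - ent μ (fun ω => (Aa ω, Bb ω, Hh ω, W ω)) - ent μ (fun ω => (Hh ω, W ω))
    linarith [I1, I2, r1, Ea, Eb, Ec, Ed, r6, r7]
  exact ⟨main, fun h0 => le_antisymm (main.trans_eq h0)
    (cmi_nonneg μ hpos Aa Bb (fun ω => (Hh ω, Gg ω, Dd ω, W ω)))⟩
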